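/- Let m be a positive integer not divisible by 3 and λ = 16π²m²/9. Let F₁ be integrable on (0,1/2), F₂ be integrable on (1/2,1), set c₂ = (1/sin(√λ/2))·[∫₀^{1/2} (sin(√λ(1/2−ξ))/√λ)·F₁(ξ) dξ + ∫_{1/2}^{1} (sin(√λ(1/2−ξ))/√λ)·F₂(ξ) dξ], and define u₁(x) = ∫₀^x (sin(√λ(x−ξ))/√λ)·F₁(ξ) dξ for x ∈ [0,1/2] and u₂(x) = c₂·sin(√λ(1−x)) − ∫_x^1 (sin(√λ(x−ξ))/√λ)·F₂(ξ) dξ for x ∈ [1/2,1]. Then max( sup_{x∈[0,1/2]} |u₁(x)|, sup_{x∈[1/2,1]} |u₂(x)| ) ≤ ((2+√3)/(√3·√λ))·(∫₀^{1/2}|F₁(ξ)| dξ + ∫_{1/2}^{1}|F₂(ξ)| dξ). -/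

import Mathlib

open Real MeasureTheory

lemma key_bound (L : ℝ) (hL : 0 < L) (F : ℝ → ℝ) (a b : ℝ) (hab : a ≤ b)
    (hF : IntegrableOn F (Set.Ioc a b)) (x : ℝ) :
    |∫ ξ in a..b, (Real.sin (L * (x - ξ)) / L) * F ξ| ≤ (1/L) * ∫ ξ in a..b, |F ξ| := by
  have habs : ∀ t : ℝ, |Real.sin (L * (x - t)) / L| ≤ 1 / L := by
    intro t
    rw [abs_div, abs_of_pos hL]
    exact div_le_div_of_nonneg_right (abs_le.mpr ⟨Real.neg_one_le_sin _, Real.sin_le_one _⟩) hL.le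
  have hFi : IntervalIntegrable F volume a b :=
    (intervalIntegrable_iff_integrableOn_Ioc_of_le hab).mpr hF
  have hgF : IntervalIntegrable (fun ξ => (Real.sin (L * (x - ξ)) / L) * F ξ) volume a b := by
    rw [intervalIntegrable_iff_integrableOn_Ioc_of_le hab]
    exact hF.bdd_mul
      (((Real.continuous_sin.comp (by continuity)).div_const L).aestronglyMeasurable)
      (Filter.Eventually.of_forall fun t => by rw [Real.norm_eq_abs]; exact habs t)
  calc |∫ ξ in a..b, (Real.sin (L * (x - ξ)) / L) * F ξ|
      ≤ ∫ ξ in a..b, |(Real.sin (L * (x - ξ)) / L) * F ξ| :=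
        intervalIntegral.abs_integral_le_integral_abs hab
    _ ≤ ∫ ξ in a..b, (1/L) * |F ξ| := by
        apply intervalIntegral.integral_mono_on hab hgF.abs (hFi.abs.const_mul _)
        intro t _
        rw [abs_mul]
        exact mul_le_mul_of_nonneg_right (habs t) (abs_nonneg _)
    _ = (1/L) * ∫ ξ in a..b, |F ξ| := intervalIntegral.integral_const_mul _ _

/-- a priori sup-norm estimate for one step of the FD-method
(`max` of the two sups is bounded iff both are bounded pointwise). -/
theorem stmt_7 (m : ℕ) (hm : 0 < m) (hm3 : ¬ (3 ∣ m))
    (lam : ℝ) (hlam : lam = 16 * π ^ 2 * (m : ℝ) ^ 2 / 9)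
    (F₁ F₂ : ℝ → ℝ)
    (hF₁ : IntegrableOn F₁ (Set.Ioo 0 (1/2)))
    (hF₂ : IntegrableOn F₂ (Set.Ioo (1/2) 1))
    (c₂ : ℝ)
    (hc₂ : c₂ = (1 / Real.sin (Real.sqrt lam / 2)) *
      ((∫ ξ in (0:ℝ)..(1/2), (Real.sin (Real.sqrt lam * (1/2 - ξ)) / Real.sqrt lam) * F₁ ξ) +
       ∫ ξ in (1/2:ℝ)..1, (Real.sin (Real.sqrt lam * (1/2 - ξ)) / Real.sqrt lam) * F₂ ξ))
    (u₁ u₂ : ℝ → ℝ)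
    (hu₁ : ∀ x ∈ Set.Icc (0:ℝ) (1/2),
      u₁ x = ∫ ξ in (0:ℝ)..x, (Real.sin (Real.sqrt lam * (x - ξ)) / Real.sqrt lam) * F₁ ξ)
    (hu₂ : ∀ x ∈ Set.Icc (1/2:ℝ) 1,
      u₂ x = c₂ * Real.sin (Real.sqrt lam * (1 - x)) -
        ∫ ξ in x..(1:ℝ), (Real.sin (Real.sqrt lam * (x - ξ)) / Real.sqrt lam) * F₂ ξ) :
    max (⨆ x : Set.Icc (0:ℝ) (1/2), |u₁ x|) (⨆ x : Set.Icc (1/2:ℝ) 1, |u₂ x|) ≤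
      ((2 + Real.sqrt 3) / (Real.sqrt 3 * Real.sqrt lam)) *
        ((∫ ξ in (0:ℝ)..(1/2), |F₁ ξ|) + ∫ ξ in (1/2:ℝ)..1, |F₂ ξ|) := by
  have hπ := Real.pi_pos
  have hm1 : (1:ℝ) ≤ (m:ℝ) := by exact_mod_cast hm
  set L : ℝ := Real.sqrt lam with hLdef
  have hLval : L = 4 * π * m / 3 := by
    rw [hLdef, hlam, show 16 * π ^ 2 * (m : ℝ) ^ 2 / 9 = (4 * π * m / 3)^2 by ring,
      Real.sqrt_sq (by positivity)]
  have hL : 0 < L := by rw [hLval]; positivity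
  have hs : Real.sqrt 3 ^ 2 = 3 := Real.sq_sqrt (by norm_num)
  have hs0 : 0 < Real.sqrt 3 := Real.sqrt_pos.mpr (by norm_num)
  -- value of |sin(L/2)|
  have hsin : |Real.sin (L / 2)| = Real.sqrt 3 / 2 := by
    have hr : m % 3 = 1 ∨ m % 3 = 2 := by
      have hmod : m % 3 ≠ 0 := fun h => hm3 (Nat.dvd_of_mod_eq_zero h)
      omega
    have hmeq : (m:ℝ) = 3 * ((m / 3 : ℕ) : ℝ) + ((m % 3 : ℕ) : ℝ) := by
      exact_mod_cast (Nat.div_add_mod m 3).symm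
    have hL2 : L / 2 = 2 * π * ((m % 3 : ℕ) : ℝ) / 3 + ((m / 3 : ℕ) : ℝ) * (2 * π) := by
      rw [hLval, hmeq]; ring
    rw [hL2, Real.sin_add_nat_mul_two_pi]
    rcases hr with h | h
    · rw [h]
      rw [show 2 * π * ((1 : ℕ) : ℝ) / 3 = π - π / 3 by push_cast; ring, Real.sin_pi_sub,
        Real.sin_pi_div_three]
      exact abs_of_nonneg (by positivity)
    · rw [h]
      rw [show 2 * π * ((2 : ℕ) : ℝ) / 3 = π + π / 3 by push_cast; ring, Real.sin_add,
        Real.sin_pi, Real.cos_pi, Real.sin_pi_div_three]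
      rw [show (0 : ℝ) * Real.cos (π/3) + -1 * (Real.sqrt 3 / 2) = -(Real.sqrt 3 / 2) by ring,
        abs_neg]
      exact abs_of_nonneg (by positivity)
  have hsinne : Real.sin (L / 2) ≠ 0 := by
    intro h; rw [h, abs_zero] at hsin
    exact absurd hsin.symm (by positivity)
  -- integrability on Ioc
  have hF₁' : IntegrableOn F₁ (Set.Ioc 0 (1/2)) :=
    (integrableOn_Ioc_iff_integrableOn_Ioo).mpr hF₁
  have hF₂' : IntegrableOn F₂ (Set.Ioc (1/2) 1) :=
    (integrableOn_Ioc_iff_integrableOn_Ioo).mpr hF₂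
  set I₁ : ℝ := ∫ ξ in (0:ℝ)..(1/2), |F₁ ξ| with hI₁
  set I₂ : ℝ := ∫ ξ in (1/2:ℝ)..1, |F₂ ξ| with hI₂
  have hI₁0 : 0 ≤ I₁ :=
    intervalIntegral.integral_nonneg (by norm_num) (fun _ _ => abs_nonneg _)
  have hI₂0 : 0 ≤ I₂ :=
    intervalIntegral.integral_nonneg (by norm_num) (fun _ _ => abs_nonneg _)
  have hFi₁ : IntervalIntegrable (fun ξ => |F₁ ξ|) volume 0 (1/2) :=
    ((intervalIntegrable_iff_integrableOn_Ioc_of_le (by norm_num)).mpr hF₁').abs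
  have hFi₂ : IntervalIntegrable (fun ξ => |F₂ ξ|) volume (1/2) 1 :=
    ((intervalIntegrable_iff_integrableOn_Ioc_of_le (by norm_num)).mpr hF₂').abs
  -- bound on u₁
  have hu₁b : ∀ x ∈ Set.Icc (0:ℝ) (1/2), |u₁ x| ≤ (1/L) * I₁ := by
    intro x hx
    rw [hu₁ x hx]
    have h1 : |∫ ξ in (0:ℝ)..x, (Real.sin (L * (x - ξ)) / L) * F₁ ξ| ≤
        (1/L) * ∫ ξ in (0:ℝ)..x, |F₁ ξ| :=
      key_bound L hL F₁ 0 x hx.1 (hF₁'.mono_set (Set.Ioc_subset_Ioc_right hx.2)) x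
    refine h1.trans (mul_le_mul_of_nonneg_left ?_ (by positivity))
    exact intervalIntegral.integral_mono_interval le_rfl hx.1 hx.2
      (Filter.Eventually.of_forall fun ξ => abs_nonneg _) hFi₁
  -- bound on c₂
  have hc₂b : |c₂| ≤ (2 / (Real.sqrt 3 * L)) * (I₁ + I₂) := by
    rw [hc₂, abs_mul, abs_div, abs_one, hsin]
    have h1 : |∫ ξ in (0:ℝ)..(1/2), (Real.sin (L * ((1:ℝ)/2 - ξ)) / L) * F₁ ξ| ≤ (1/L) * I₁ :=
      key_bound L hL F₁ 0 (1/2) (by norm_num) hF₁' (1/2)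
    have h2 : |∫ ξ in (1/2:ℝ)..1, (Real.sin (L * ((1:ℝ)/2 - ξ)) / L) * F₂ ξ| ≤ (1/L) * I₂ :=
      key_bound L hL F₂ (1/2) 1 (by norm_num) hF₂' (1/2)
    have htri := abs_add_le (∫ ξ in (0:ℝ)..(1/2), (Real.sin (L * ((1:ℝ)/2 - ξ)) / L) * F₁ ξ)
      (∫ ξ in (1/2:ℝ)..1, (Real.sin (L * ((1:ℝ)/2 - ξ)) / L) * F₂ ξ)
    have : 1 / (Real.sqrt 3 / 2) * ((1/L) * I₁ + (1/L) * I₂) =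
        (2 / (Real.sqrt 3 * L)) * (I₁ + I₂) := by
      field_simp
    calc 1 / (Real.sqrt 3 / 2) *
          |(∫ ξ in (0:ℝ)..(1/2), (Real.sin (L * ((1:ℝ)/2 - ξ)) / L) * F₁ ξ) +
            ∫ ξ in (1/2:ℝ)..1, (Real.sin (L * ((1:ℝ)/2 - ξ)) / L) * F₂ ξ|
        ≤ 1 / (Real.sqrt 3 / 2) * ((1/L) * I₁ + (1/L) * I₂) := by
          apply mul_le_mul_of_nonneg_left _ (by positivity)
          exact htri.trans (add_le_add h1 h2)
      _ = (2 / (Real.sqrt 3 * L)) * (I₁ + I₂) := this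
  -- bound on u₂
  have hu₂b : ∀ x ∈ Set.Icc (1/2:ℝ) 1, |u₂ x| ≤ |c₂| + (1/L) * I₂ := by
    intro x hx
    rw [hu₂ x hx]
    have h1 : |∫ ξ in x..(1:ℝ), (Real.sin (L * (x - ξ)) / L) * F₂ ξ| ≤
        (1/L) * ∫ ξ in x..(1:ℝ), |F₂ ξ| :=
      key_bound L hL F₂ x 1 hx.2 (hF₂'.mono_set (Set.Ioc_subset_Ioc_left hx.1)) x
    have h2 : (1/L) * (∫ ξ in x..(1:ℝ), |F₂ ξ|) ≤ (1/L) * I₂ := by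
      refine mul_le_mul_of_nonneg_left ?_ (by positivity)
      exact intervalIntegral.integral_mono_interval hx.1 hx.2 le_rfl
        (Filter.Eventually.of_forall fun ξ => abs_nonneg _) hFi₂
    calc |c₂ * Real.sin (L * (1 - x)) - ∫ ξ in x..(1:ℝ), (Real.sin (L * (x - ξ)) / L) * F₂ ξ|
        ≤ |c₂ * Real.sin (L * (1 - x))| +
          |∫ ξ in x..(1:ℝ), (Real.sin (L * (x - ξ)) / L) * F₂ ξ| := abs_sub _ _
      _ ≤ |c₂| + (1/L) * I₂ := by
          apply add_le_add _ (h1.trans h2)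
          rw [abs_mul]
          calc |c₂| * |Real.sin (L * (1 - x))| ≤ |c₂| * 1 :=
                mul_le_mul_of_nonneg_left
                  (abs_le.mpr ⟨Real.neg_one_le_sin _, Real.sin_le_one _⟩) (abs_nonneg _)
            _ = |c₂| := mul_one _
  -- final arithmetic
  have hB1 : (1/L) * I₁ ≤ ((2 + Real.sqrt 3) / (Real.sqrt 3 * L)) * (I₁ + I₂) := by
    rw [div_mul_eq_mul_div, div_mul_eq_mul_div, le_div_iff₀ (by positivity), one_mul,
      div_mul_eq_mul_div, div_le_iff₀ hL]
    nlinarith [mul_nonneg hs0.le hI₂0, mul_nonneg hI₁0 hL.le, mul_nonneg hI₂0 hL.le]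
  have hB2 : (2 / (Real.sqrt 3 * L)) * (I₁ + I₂) + (1/L) * I₂ ≤
      ((2 + Real.sqrt 3) / (Real.sqrt 3 * L)) * (I₁ + I₂) := by
    have key : (2 + Real.sqrt 3) / (Real.sqrt 3 * L) = 2 / (Real.sqrt 3 * L) + 1/L := by
      rw [div_add_div _ _ (by positivity : Real.sqrt 3 * L ≠ 0) (by positivity : L ≠ 0),
        div_eq_div_iff (by positivity) (by positivity)]
      ring
    rw [key, add_mul]
    exact add_le_add_right
      (mul_le_mul_of_nonneg_left (le_add_of_nonneg_left hI₁0) (by positivity)) _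
  haveI : Nonempty (Set.Icc (0:ℝ) (1/2)) := ⟨⟨0, by constructor <;> norm_num⟩⟩
  haveI : Nonempty (Set.Icc (1/2:ℝ) 1) := ⟨⟨1/2, by constructor <;> norm_num⟩⟩
  apply max_le
  · apply ciSup_le
    rintro ⟨x, hx⟩
    exact (hu₁b x hx).trans hB1
  · apply ciSup_le
    rintro ⟨x, hx⟩
    exact (hu₂b x hx).trans ((add_le_add_left hc₂b _).trans hB2)
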